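/- Let w*(m) = ((n(h)−1)/(n(h) − 1/n(m)))·F(m₁,h₂) for m₁ > h₁, m₂ < h₂, where n(z) = 1/(c(1−F(z))). If c ≤ √2/2, then ∂w*/∂m₁ > 0. The key inequality is c²·(1−F(h))·(1 − F(m) + F(m₁,h₂)) ≤ 1, which holds since (1−F(h))(1−F(m)+F(m₁,h₂)) ≤ 2 and c² ≤ 1/2. -/
import Mathlib
set_option maxHeartbeats 1000000


/-- Let w*(m) = ((n(h)−1)/(n(h) − 1/n(m)))·F(m₁,h₂) for m₁ > h₁,
m₂ < h₂, n(z) = 1/(c(1−F(z))). If c ≤ √2/2, then the key inequality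
c²(1−F(h))(1 − F(m) + F(m₁,h₂)) ≤ 1 holds and ∂w*/∂m₁ > 0. -/
theorem stmt13 (F f : ℝ → ℝ → ℝ) (h1 h2 c m1 m2 dm dh : ℝ)
    (hc : 0 < c) (hc2 : c ≤ Real.sqrt 2 / 2)
    (hh1 : h1 ∈ Set.Ioo (0:ℝ) 1) (hh2 : h2 ∈ Set.Ioo (0:ℝ) 1)
    (hm1 : h1 < m1) (hm1le : m1 ≤ 1) (hm2 : m2 < h2) (hm2nn : 0 ≤ m2)
    (hFh0 : 0 ≤ F h1 h2) (hFh1 : F h1 h2 < 1)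
    (hFm0 : 0 ≤ F m1 m2) (hFm1 : F m1 m2 ≤ F m1 h2) (hFmh : F m1 h2 ≤ 1)
    (hdm : HasDerivAt (fun t => F t m2) dm m1)
    (hdh : HasDerivAt (fun t => F t h2) dh m1)
    (hdm0 : 0 < dm) (hdmdh : dm < dh) :
    c ^ 2 * (1 - F h1 h2) * (1 - F m1 m2 + F m1 h2) ≤ 1
      ∧ ∀ D : ℝ,
          HasDerivAt
            (fun t =>
              ((1 / (c * (1 - F h1 h2)) - 1) / (1 / (c * (1 - F h1 h2)) - c * (1 - F t m2)))
                * F t h2) D m1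
          → 0 < D := by
  have hs2 : Real.sqrt 2 ^ 2 = 2 := Real.sq_sqrt (by norm_num)
  have hs2nn : 0 ≤ Real.sqrt 2 := Real.sqrt_nonneg 2
  have hc12 : c ^ 2 ≤ 1 / 2 := by nlinarith
  have hc1 : c < 1 := by nlinarith
  have hFm01 : F m1 m2 ≤ 1 := le_trans hFm1 hFmh
  have hFmh0 : 0 ≤ F m1 h2 := le_trans hFm0 hFm1
  have hA1 : 1 - F h1 h2 ≤ 1 := by linarith
  have hA0 : 0 ≤ 1 - F h1 h2 := by linarith
  have hB2 : 1 - F m1 m2 + F m1 h2 ≤ 2 := by linarith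
  have hB0 : 0 ≤ 1 - F m1 m2 + F m1 h2 := by linarith
  have hAB : (1 - F h1 h2) * (1 - F m1 m2 + F m1 h2) ≤ 2 := by nlinarith
  have hABnn : 0 ≤ (1 - F h1 h2) * (1 - F m1 m2 + F m1 h2) := mul_nonneg hA0 hB0
  have key : c ^ 2 * (1 - F h1 h2) * (1 - F m1 m2 + F m1 h2) ≤ 1 := by
    nlinarith [mul_le_mul_of_nonneg_left hAB (sq_nonneg c),
      mul_le_mul_of_nonneg_right hc12 hABnn]
  refine ⟨key, ?_⟩
  set K : ℝ := 1 / (c * (1 - F h1 h2)) with hK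
  have hd : 0 < c * (1 - F h1 h2) := mul_pos hc (by linarith)
  have hKd : K * (c * (1 - F h1 h2)) = 1 := by rw [hK, one_div, inv_mul_cancel₀ hd.ne']
  have hK1 : 1 < K := by
    rw [hK]
    exact one_lt_one_div hd (by nlinarith)
  set g : ℝ := K - c * (1 - F m1 m2) with hg
  have hcFm : c * (1 - F m1 m2) < 1 := by nlinarith
  have hgpos : 0 < g := by simp only [hg]; linarith
  have hkey : c * F m1 h2 ≤ g := by
    simp only [hg]
    nlinarith
  -- construct the derivative
  have hden : HasDerivAt (fun t => K - c * (1 - F t m2)) (c * dm) m1 := by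
    have h' : (fun t : ℝ => K - c * (1 - F t m2)) = (fun t => (K - c) + c * F t m2) := by
      funext t; ring
    rw [h']
    exact HasDerivAt.const_add (K - c) (HasDerivAt.const_mul c hdm)
  have hnum : HasDerivAt (fun _ : ℝ => K - 1) 0 m1 := hasDerivAt_const m1 (K - 1)
  have hdiv : HasDerivAt (fun t => (K - 1) / (K - c * (1 - F t m2)))
      ((0 * g - (K - 1) * (c * dm)) / g ^ 2) m1 :=
    hnum.div hden hgpos.ne'
  have hfull : HasDerivAt
      (fun t => ((K - 1) / (K - c * (1 - F t m2))) * F t h2)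
      (((0 * g - (K - 1) * (c * dm)) / g ^ 2) * F m1 h2 + ((K - 1) / g) * dh) m1 :=
    hdiv.mul hdh
  intro D hD
  have hDeq : D = ((0 * g - (K - 1) * (c * dm)) / g ^ 2) * F m1 h2 + ((K - 1) / g) * dh :=
    hD.unique hfull
  rw [hDeq]
  have hval : ((0 * g - (K - 1) * (c * dm)) / g ^ 2) * F m1 h2 + ((K - 1) / g) * dh
      = (K - 1) * (g * dh - c * dm * F m1 h2) / g ^ 2 := by
    field_simp
    ring
  rw [hval]
  apply div_pos _ (by positivity)
  apply mul_pos (by linarith)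
  nlinarith [mul_lt_mul_of_pos_left hdmdh hgpos, mul_le_mul_of_nonneg_right hkey hdm0.le]
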